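/- Suppose K₀ : {2,3,...} → (0,∞) satisfies ∑_{t≥2}(t-1)K₀(t) = 1 and ∑_{t≥2} t²K₀(t) < ∞. Let g(h) be the unique solution of ∑_{t≥2}(t-1)K₀(t)exp(h - t·g(h)) = 1 for h ≥ 0. Then as h ↓ 0, g(h) ~ h / ∑_{t≥2} t(t-1)K₀(t), i.e. lim_{h↓0} g(h)·(∑_{t≥2} t(t-1)K₀(t))/h = 1. -/

import Mathlib

open Filter Topology

/-- If `∑_{t ≥ 2} t² K₀(t) < ∞` (and `∑_{t ≥ 2} (t-1) K₀(t) = 1`), then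
the implicitly defined free energy `g(h)` satisfies
`g(h) ~ h / ∑_{t ≥ 2} t(t-1) K₀(t)` as `h ↓ 0`, i.e.
`g(h) (∑_{t ≥ 2} t(t-1) K₀(t)) / h → 1`. -/
theorem gPS_free_energy_g_linear_asymptotics
    (K₀ : ℕ → ℝ) (hpos : ∀ t, 2 ≤ t → 0 < K₀ t)
    (hnorm : ∑' t : ℕ, ((t : ℝ) + 1) * K₀ (t + 2) = 1)
    (hsq : Summable (fun t : ℕ => ((t : ℝ) + 2) ^ 2 * K₀ (t + 2)))
    (g : ℝ → ℝ)
    (hg : ∀ h : ℝ, 0 ≤ h →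
      0 ≤ g h ∧
      ∑' t : ℕ, ((t : ℝ) + 1) * K₀ (t + 2) * Real.exp (h - ((t : ℝ) + 2) * g h) = 1) :
    Tendsto (fun h : ℝ => g h * (∑' t : ℕ, ((t : ℝ) + 2) * ((t : ℝ) + 1) * K₀ (t + 2)) / h)
      (nhdsWithin 0 (Set.Ioi 0)) (nhds 1) := by
  -- Basic notation
  set K : ℕ → ℝ := fun t => ((t : ℝ) + 1) * K₀ (t + 2) with hKdef
  set b : ℕ → ℝ := fun t => ((t : ℝ) + 2) * ((t : ℝ) + 1) * K₀ (t + 2) with hbdef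
  set S : ℝ := ∑' t : ℕ, b t with hSdef
  have hK0pos : ∀ t : ℕ, 0 < K₀ (t + 2) := fun t => hpos (t + 2) (by omega)
  have hKpos : ∀ t, 0 < K t := fun t => by
    have := hK0pos t; positivity
  have hbpos : ∀ t, 0 < b t := fun t => by
    have := hK0pos t; positivity
  -- Summability
  have hsumK : Summable K := by
    refine hsq.of_nonneg_of_le (fun t => (hKpos t).le) (fun t => ?_)
    have h0 := (hK0pos t).le
    have : ((t : ℝ) + 1) ≤ ((t : ℝ) + 2) ^ 2 := by nlinarith [Nat.cast_nonneg (α := ℝ) t]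
    exact mul_le_mul_of_nonneg_right this h0
  have hsumb : Summable b := by
    refine hsq.of_nonneg_of_le (fun t => (hbpos t).le) (fun t => ?_)
    have h0 := (hK0pos t).le
    have : ((t : ℝ) + 2) * ((t : ℝ) + 1) ≤ ((t : ℝ) + 2) ^ 2 := by
      nlinarith [Nat.cast_nonneg (α := ℝ) t]
    exact mul_le_mul_of_nonneg_right this h0
  have hSpos : 0 < S := Summable.tsum_pos hsumb (fun t => (hbpos t).le) 0 (hbpos 0)
  -- summability of exponentially damped versions
  have hsumKe : ∀ a : ℝ, 0 ≤ a →
      Summable (fun t : ℕ => K t * Real.exp (-(((t : ℝ) + 2) * a))) := by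
    intro a ha
    refine hsumK.of_nonneg_of_le
      (fun t => mul_nonneg (hKpos t).le (Real.exp_nonneg _)) (fun t => ?_)
    have : Real.exp (-(((t : ℝ) + 2) * a)) ≤ 1 := by
      apply Real.exp_le_one_iff.mpr
      have : (0:ℝ) ≤ ((t : ℝ) + 2) * a := by positivity
      linarith
    nlinarith [(hKpos t).le]
  have hsumbe : ∀ a : ℝ, 0 ≤ a →
      Summable (fun t : ℕ => b t * Real.exp (-(((t : ℝ) + 2) * a))) := by
    intro a ha
    refine hsumb.of_nonneg_of_le
      (fun t => mul_nonneg (hbpos t).le (Real.exp_nonneg _)) (fun t => ?_)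
    have : Real.exp (-(((t : ℝ) + 2) * a)) ≤ 1 := by
      apply Real.exp_le_one_iff.mpr
      have : (0:ℝ) ≤ ((t : ℝ) + 2) * a := by positivity
      linarith
    nlinarith [(hbpos t).le]
  -- The fundamental identity: `∑ K t e^{-(t+2) g h} = e^{-h}` for `h ≥ 0`.
  have hEq : ∀ h : ℝ, 0 ≤ h →
      ∑' t : ℕ, K t * Real.exp (-(((t : ℝ) + 2) * g h)) = Real.exp (-h) := by
    intro h hh
    have h2 := (hg h hh).2
    have hrw : (fun t : ℕ => ((t : ℝ) + 1) * K₀ (t + 2) * Real.exp (h - ((t : ℝ) + 2) * g h))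
        = fun t : ℕ => Real.exp h * (K t * Real.exp (-(((t : ℝ) + 2) * g h))) := by
      funext t
      rw [show h - ((t : ℝ) + 2) * g h = h + (-(((t : ℝ) + 2) * g h)) by ring, Real.exp_add]
      ring
    rw [hrw, tsum_mul_left] at h2
    have := Real.exp_pos h
    rw [Real.exp_neg]
    exact (inv_eq_of_mul_eq_one_right h2).symm
  -- the difference identity: `∑ K t (1 - e^{-(t+2) g h}) = 1 - e^{-h}`.
  have hDiff : ∀ h : ℝ, 0 ≤ h →
      ∑' t : ℕ, K t * (1 - Real.exp (-(((t : ℝ) + 2) * g h))) = 1 - Real.exp (-h) := by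
    intro h hh
    have ha := (hg h hh).1
    have : (fun t : ℕ => K t * (1 - Real.exp (-(((t : ℝ) + 2) * g h))))
        = fun t : ℕ => K t - K t * Real.exp (-(((t : ℝ) + 2) * g h)) := by
      funext t; ring
    rw [this, Summable.tsum_sub hsumK (hsumKe _ ha), hEq h hh]
    rw [hnorm]
  -- positivity of `g` on positive `h`
  have hgpos : ∀ h : ℝ, 0 < h → 0 < g h := by
    intro h hh
    rcases lt_or_eq_of_le (hg h hh.le).1 with hlt | heq
    · exact hlt
    · exfalso
      have := hDiff h hh.le
      rw [← heq] at this
      simp only [mul_zero, neg_zero, Real.exp_zero, sub_self, mul_zero, tsum_zero] at this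
      have : Real.exp (-h) = 1 := by linarith
      have := Real.exp_lt_one_iff.mpr (by linarith : -h < 0)
      linarith
  -- Upper bound: `1 - e^{-h} ≤ g h * S`
  have hUpper : ∀ h : ℝ, 0 ≤ h → 1 - Real.exp (-h) ≤ g h * S := by
    intro h hh
    have ha := (hg h hh).1
    rw [← hDiff h hh]
    have hle : ∀ t : ℕ, K t * (1 - Real.exp (-(((t : ℝ) + 2) * g h))) ≤ g h * b t := by
      intro t
      have hx : (0:ℝ) ≤ ((t : ℝ) + 2) * g h := by positivity
      have h1 : 1 - Real.exp (-(((t : ℝ) + 2) * g h)) ≤ ((t : ℝ) + 2) * g h := by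
        have := Real.add_one_le_exp (-(((t : ℝ) + 2) * g h))
        linarith
      have := (hKpos t).le
      calc K t * (1 - Real.exp (-(((t : ℝ) + 2) * g h)))
          ≤ K t * (((t : ℝ) + 2) * g h) := by
            exact mul_le_mul_of_nonneg_left h1 this
        _ = g h * b t := by simp only [hKdef, hbdef]; ring
    calc ∑' t : ℕ, K t * (1 - Real.exp (-(((t : ℝ) + 2) * g h)))
        ≤ ∑' t : ℕ, g h * b t := by
          refine Summable.tsum_le_tsum hle ?_ (hsumb.mul_left _)
          · refine Summable.of_nonneg_of_le (fun t => ?_) hle (hsumb.mul_left _)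
            have hx : (0:ℝ) ≤ ((t : ℝ) + 2) * g h := by positivity
            have : Real.exp (-(((t : ℝ) + 2) * g h)) ≤ 1 :=
              Real.exp_le_one_iff.mpr (by linarith)
            nlinarith [(hKpos t).le]
      _ = g h * S := tsum_mul_left
  -- Lower bound with `φ a = ∑ b t e^{-(t+2)a}`
  set φ : ℝ → ℝ := fun a => ∑' t : ℕ, b t * Real.exp (-(((t : ℝ) + 2) * a)) with hφdef
  have hφpos : ∀ a : ℝ, 0 ≤ a → 0 < φ a := by
    intro a ha
    exact Summable.tsum_pos (hsumbe a ha) (fun t => mul_nonneg (hbpos t).le (Real.exp_nonneg _)) 0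
      (mul_pos (hbpos 0) (Real.exp_pos _))
  have hφleS : ∀ a : ℝ, 0 ≤ a → φ a ≤ S := by
    intro a ha
    refine Summable.tsum_le_tsum (fun t => ?_) (hsumbe a ha) hsumb
    have hx : (0:ℝ) ≤ ((t : ℝ) + 2) * a := by positivity
    have : Real.exp (-(((t : ℝ) + 2) * a)) ≤ 1 := Real.exp_le_one_iff.mpr (by linarith)
    nlinarith [(hbpos t).le]
  have hLower : ∀ h : ℝ, 0 ≤ h → g h * φ (g h) ≤ 1 - Real.exp (-h) := by
    intro h hh
    have ha := (hg h hh).1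
    rw [← hDiff h hh]
    simp only [hφdef]
    rw [← tsum_mul_left]
    have hle : ∀ t : ℕ,
        g h * (b t * Real.exp (-(((t : ℝ) + 2) * g h)))
          ≤ K t * (1 - Real.exp (-(((t : ℝ) + 2) * g h))) := by
      intro t
      set x : ℝ := ((t : ℝ) + 2) * g h with hxdef
      have hx : (0:ℝ) ≤ x := by positivity
      have hkey : x * Real.exp (-x) ≤ 1 - Real.exp (-x) := by
        have h1 := Real.add_one_le_exp x
        have h2 : Real.exp x * Real.exp (-x) = 1 := by
          rw [← Real.exp_add]; simp
        nlinarith [mul_le_mul_of_nonneg_right h1 (Real.exp_pos (-x)).le]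
      have : g h * (b t * Real.exp (-x)) = K t * (x * Real.exp (-x)) := by
        simp only [hKdef, hbdef, hxdef]; ring
      rw [this]
      exact mul_le_mul_of_nonneg_left hkey (hKpos t).le
    refine Summable.tsum_le_tsum hle ((hsumbe _ ha).mul_left _) ?_
    have hrw : (fun t : ℕ => K t * (1 - Real.exp (-(((t : ℝ) + 2) * g h))))
        = fun t : ℕ => K t - K t * Real.exp (-(((t : ℝ) + 2) * g h)) := by
      funext t; ring
    rw [hrw]
    exact hsumK.sub (hsumKe _ ha)
  -- `g h → 0` as `h → 0⁺`
  have hg0 : Tendsto g (nhdsWithin 0 (Set.Ioi 0)) (nhds 0) := by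
    rw [Metric.tendsto_nhdsWithin_nhds]
    intro ε hε
    set C : ℝ := ∑' t : ℕ, K t * Real.exp (-(((t : ℝ) + 2) * ε)) with hCdef
    have hCpos : 0 < C := Summable.tsum_pos (hsumKe ε hε.le)
      (fun t => mul_nonneg (hKpos t).le (Real.exp_nonneg _)) 0
      (mul_pos (hKpos 0) (Real.exp_pos _))
    have hC1 : C < 1 := by
      rw [← hnorm]
      refine Summable.tsum_lt_tsum (f := fun t : ℕ => K t * Real.exp (-(((t : ℝ) + 2) * ε)))
        (i := 0) (fun t => ?_) ?_ (hsumKe ε hε.le) hsumK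
      · have he : Real.exp (-(((t : ℝ) + 2) * ε)) ≤ 1 := by
          apply Real.exp_le_one_iff.mpr
          have : (0:ℝ) < ((t : ℝ) + 2) * ε := by positivity
          linarith
        have := mul_le_mul_of_nonneg_left he (hKpos t).le
        simpa using this
      · have he : Real.exp (-((((0 : ℕ) : ℝ) + 2) * ε)) < 1 := by
          apply Real.exp_lt_one_iff.mpr
          have : (0:ℝ) < (((0:ℕ) : ℝ) + 2) * ε := by positivity
          linarith
        have h0 := hKpos 0
        have h1 := mul_lt_mul_of_pos_left he h0
        have h2 : K 0 = K₀ 2 := by simp [hKdef]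
        rw [mul_one] at h1
        simpa [h2] using h1
    have hlogC : Real.log C < 0 := Real.log_neg hCpos hC1
    refine ⟨-Real.log C, by linarith, ?_⟩
    intro h hh hdist
    simp only [Real.dist_eq, sub_zero] at hdist ⊢
    have hh' : 0 < h := hh
    rw [abs_of_pos hh'] at hdist
    rw [abs_of_nonneg (hg h hh'.le).1]
    by_contra hcon
    push_neg at hcon
    -- then `e^{-h} = ∑ K e^{-(t+2) g h} ≤ C`
    have hle : Real.exp (-h) ≤ C := by
      rw [← hEq h hh'.le]
      refine Summable.tsum_le_tsum (fun t => ?_) (hsumKe _ (hg h hh'.le).1) (hsumKe ε hε.le)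
      have he : Real.exp (-(((t : ℝ) + 2) * g h)) ≤ Real.exp (-(((t : ℝ) + 2) * ε)) := by
        apply Real.exp_le_exp.mpr
        have : ((t : ℝ) + 2) * ε ≤ ((t : ℝ) + 2) * g h := by
          apply mul_le_mul_of_nonneg_left hcon (by positivity)
        linarith
      exact mul_le_mul_of_nonneg_left he (hKpos t).le
    have : -h ≤ Real.log C := by
      have := Real.log_le_log (Real.exp_pos _) hle
      rwa [Real.log_exp] at this
    linarith
  -- `φ (g h) → S`
  have hφtend : Tendsto (fun h => φ (g h)) (nhdsWithin 0 (Set.Ioi 0)) (nhds S) := by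
    rw [hSdef]
    have : (fun h => φ (g h))
        = fun h => ∑' t : ℕ, b t * Real.exp (-(((t : ℝ) + 2) * g h)) := rfl
    rw [this]
    refine tendsto_tsum_of_dominated_convergence (bound := b) hsumb (fun t => ?_) ?_
    · have h1 : Tendsto (fun h : ℝ => -(((t : ℝ) + 2) * g h))
          (nhdsWithin 0 (Set.Ioi 0)) (nhds 0) := by
        have := hg0.const_mul ((t : ℝ) + 2)
        simpa using this.neg
      have := (Real.continuous_exp.tendsto 0).comp h1
      simp only [Real.exp_zero] at this
      simpa using this.const_mul (b t)
    · filter_upwards [self_mem_nhdsWithin] with h hh t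
      have ha := (hg h (le_of_lt hh)).1
      have he : Real.exp (-(((t : ℝ) + 2) * g h)) ≤ 1 := by
        apply Real.exp_le_one_iff.mpr
        have : (0:ℝ) ≤ ((t : ℝ) + 2) * g h := by positivity
        linarith
      rw [Real.norm_eq_abs, abs_of_nonneg (mul_nonneg (hbpos t).le (Real.exp_nonneg _))]
      have := mul_le_mul_of_nonneg_left he (hbpos t).le
      simpa using this
  -- The ratio `r h = g h * S / (1 - e^{-h}) → 1`
  have hexplt : ∀ h : ℝ, 0 < h → 0 < 1 - Real.exp (-h) := by
    intro h hh
    have := Real.exp_lt_one_iff.mpr (by linarith : -h < 0)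
    linarith
  have hr : Tendsto (fun h : ℝ => g h * S / (1 - Real.exp (-h)))
      (nhdsWithin 0 (Set.Ioi 0)) (nhds 1) := by
    have hub : Tendsto (fun h : ℝ => S / φ (g h)) (nhdsWithin 0 (Set.Ioi 0)) (nhds 1) := by
      have := (tendsto_const_nhds (x := S)).div hφtend (ne_of_gt hSpos)
      rw [div_self (ne_of_gt hSpos)] at this
      exact this
    refine tendsto_of_tendsto_of_tendsto_of_le_of_le' tendsto_const_nhds hub ?_ ?_
    · filter_upwards [self_mem_nhdsWithin] with h hh
      have hh' : (0:ℝ) < h := hh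
      exact (one_le_div (hexplt h hh')).mpr (hUpper h hh'.le)
    · filter_upwards [self_mem_nhdsWithin] with h hh
      have hh' : (0:ℝ) < h := hh
      have hgp := hgpos h hh'
      have hφp := hφpos (g h) hgp.le
      have hl := hLower h hh'.le
      have h1 : g h * S / (1 - Real.exp (-h)) ≤ g h * S / (g h * φ (g h)) := by
        apply div_le_div_of_nonneg_left (mul_nonneg hgp.le hSpos.le) (mul_pos hgp hφp) hl
      calc g h * S / (1 - Real.exp (-h)) ≤ g h * S / (g h * φ (g h)) := h1
        _ = S / φ (g h) := by
            rw [mul_div_mul_left _ _ (ne_of_gt hgp)]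
  -- `(1 - e^{-h})/h → 1`
  have hslope : Tendsto (fun h : ℝ => (1 - Real.exp (-h)) / h)
      (nhdsWithin 0 (Set.Ioi 0)) (nhds 1) := by
    have hD : HasDerivAt (fun x : ℝ => 1 - Real.exp (-x)) 1 0 := by
      have h1 : HasDerivAt (fun x : ℝ => -x) (-1) 0 := (hasDerivAt_id 0).neg
      have h2 : HasDerivAt (fun x : ℝ => Real.exp (-x)) (Real.exp (-0) * (-1)) 0 :=
        (Real.hasDerivAt_exp (-0)).comp 0 h1
      have h3 := (hasDerivAt_const (0:ℝ) (1:ℝ)).sub h2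
      exact h3.congr_deriv (by simp)
    have := hasDerivAt_iff_tendsto_slope.mp hD
    have h4 : Tendsto (slope (fun x : ℝ => 1 - Real.exp (-x)) 0)
        (nhdsWithin 0 (Set.Ioi 0)) (nhds 1) :=
      this.mono_left (nhdsWithin_mono 0 (fun x hx => ne_of_gt hx))
    refine h4.congr' ?_
    filter_upwards [self_mem_nhdsWithin] with h hh
    simp [slope_def_field]
  -- combine
  have := hr.mul hslope
  rw [mul_one] at this
  refine this.congr' ?_
  filter_upwards [self_mem_nhdsWithin] with h hh
  have hh' : (0:ℝ) < h := hh
  have hne := ne_of_gt (hexplt h hh')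
  field_simp
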